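/- Let K > 0 and let κ : ℝ → ℝ be continuous with |κ(s)| ≤ K for all s. Let η ∈ (0,1/24), ρ = 1/8 + η, and set ã(σ,τ) = 1 − h^{1/2}·τ·κ(h^{1/8}σ). There exist constants C > 0 and h₀ ∈ (0,1), depending only on K and η, such that for all h ∈ (0,h₀) and every square-integrable function v on (−h^{−η}, h^{−η}) × (0, h^{−ρ}): ‖R⁻_{0,h}v − R₀⁻v‖ ≤ C·h^{1/2−ρ}·‖v‖ and ‖R̃⁻_{0,h}v − R₀⁻v‖ ≤ C·h^{1/2−ρ}·‖v‖, where (R₀⁻v)(σ) = ∫₀^{h^{−ρ}} u_{0,h}(τ)v(σ,τ) dτ, (R⁻_{0,h}v)(σ) = ∫₀^{h^{−ρ}} u_{0,h}(τ)v(σ,τ)·ã(σ,τ) dτ, (R̃⁻_{0,h}v)(σ) = ∫₀^{h^{−ρ}} u_{0,h}(τ)v(σ,τ)·ã(σ,τ)^{−1} dτ, and the norms are the L² norms on (−h^{−η}, h^{−η}) and on (−h^{−η}, h^{−η}) × (0, h^{−ρ}) respectively. -/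

import Mathlib

open MeasureTheory Real Set

noncomputable section

/-- The secular function whose zeros `w > 0` correspond, via `λ = -w²`, to the negative
eigenvalues of the 1D Laplacian on `(0, h^{-ρ})` with Robin condition `u'(0) = -u(0)`
and Dirichlet condition `u(h^{-ρ}) = 0`. -/
def secular (ρ h v : ℝ) : ℝ := v - 1 + (v + 1) * Real.exp (-2 * v * h ^ (-ρ))

lemma key_slice (T : ℝ) (hT : 0 < T) (u : ℝ → ℝ) (hu : Continuous u)
    (hu0 : ∀ τ ∈ Set.Ioo (0:ℝ) T, u τ ≠ 0)
    (hu2 : (∫ τ in Set.Ioc (0:ℝ) T, u τ ^ 2) = 1)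
    (c : ℝ → ℝ) (hc : Measurable c) (hc0 : ∀ τ ∈ Set.Ioc (0:ℝ) T, c τ ≠ 0)
    (ε : ℝ) (hε : 0 ≤ ε) (hb : ∀ τ ∈ Set.Ioc (0:ℝ) T, |c τ - 1| ≤ ε)
    (g : ℝ → ℝ) (hg : IntegrableOn (fun τ => g τ ^ 2) (Set.Ioc (0:ℝ) T)) :
    ((∫ τ in (0:ℝ)..T, u τ * g τ * c τ) - ∫ τ in (0:ℝ)..T, u τ * g τ) ^ 2
      ≤ ε ^ 2 * ∫ τ in Set.Ioc (0:ℝ) T, g τ ^ 2 := by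
  have hg0 : (0:ℝ) ≤ ∫ τ in Set.Ioc (0:ℝ) T, g τ ^ 2 :=
    setIntegral_nonneg measurableSet_Ioc fun τ _ => sq_nonneg _
  have hmemIoc : ∀ᵐ τ ∂(volume.restrict (Set.Ioc (0:ℝ) T)), τ ∈ Set.Ioc (0:ℝ) T :=
    ae_restrict_mem measurableSet_Ioc
  have hneT : ∀ᵐ τ ∂(volume.restrict (Set.Ioc (0:ℝ) T)), τ ≠ T := by
    refine ae_restrict_of_ae ?_
    rw [ae_iff]
    simp only [not_not, Set.setOf_eq_eq_singleton]
    exact measure_singleton T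
  have haeIoo : ∀ᵐ τ ∂(volume.restrict (Set.Ioc (0:ℝ) T)), τ ∈ Set.Ioo (0:ℝ) T := by
    filter_upwards [hmemIoc, hneT] with τ h1 h2
    exact ⟨h1.1, lt_of_le_of_ne h1.2 h2⟩
  by_cases hm : AEStronglyMeasurable g (volume.restrict (Set.Ioc (0:ℝ) T))
  · -- measurable case
    haveI : IsFiniteMeasure (volume.restrict (Set.Ioc (0:ℝ) T)) := by
      constructor
      rw [Measure.restrict_apply_univ, Real.volume_Ioc]
      exact ENNReal.ofReal_lt_top
    have hgL2 : MemLp g 2 (volume.restrict (Set.Ioc (0:ℝ) T)) :=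
      (memLp_two_iff_integrable_sq hm).2 hg
    obtain ⟨M, hM⟩ :=
      isCompact_Icc.exists_bound_of_continuousOn
        (hu.continuousOn : ContinuousOn u (Set.Icc (0:ℝ) T))
    have hM0 : 0 ≤ M := le_trans (norm_nonneg _) (hM 0 ⟨le_refl _, hT.le⟩)
    have hFm : AEStronglyMeasurable (fun τ => u τ * (c τ - 1))
        (volume.restrict (Set.Ioc (0:ℝ) T)) :=
      (hu.measurable.mul (hc.sub measurable_const)).aestronglyMeasurable
    have hFL2 : MemLp (fun τ => u τ * (c τ - 1)) 2 (volume.restrict (Set.Ioc (0:ℝ) T)) := by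
      refine MemLp.of_bound hFm (M * ε) ?_
      filter_upwards [hmemIoc] with τ hτ
      have h1 := hb τ hτ
      have h2 : ‖u τ‖ ≤ M := hM τ (Set.Ioc_subset_Icc_self hτ)
      rw [Real.norm_eq_abs, abs_mul]
      exact mul_le_mul (by simpa [Real.norm_eq_abs] using h2) h1 (abs_nonneg _) hM0
    have hgInt : Integrable g (volume.restrict (Set.Ioc (0:ℝ) T)) :=
      hgL2.integrable (by norm_num)
    have huAesm : AEStronglyMeasurable u (volume.restrict (Set.Ioc (0:ℝ) T)) :=
      hu.aestronglyMeasurable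
    have hubd : ∀ᵐ τ ∂(volume.restrict (Set.Ioc (0:ℝ) T)), ‖u τ‖ ≤ M := by
      filter_upwards [hmemIoc] with τ hτ
      exact hM τ (Set.Ioc_subset_Icc_self hτ)
    have hug : Integrable (fun τ => u τ * g τ) (volume.restrict (Set.Ioc (0:ℝ) T)) :=
      hgInt.bdd_mul huAesm hubd
    have hugc : Integrable (fun τ => u τ * g τ * c τ) (volume.restrict (Set.Ioc (0:ℝ) T)) := by
      have h1 : Integrable (fun τ => (u τ * c τ) * g τ) (volume.restrict (Set.Ioc (0:ℝ) T)) := by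
        refine hgInt.bdd_mul (c := M * (1 + ε)) ((hu.measurable.mul hc).aestronglyMeasurable) ?_
        filter_upwards [hmemIoc] with τ hτ
        have h1 := hb τ hτ
        have h2 : ‖u τ‖ ≤ M := hM τ (Set.Ioc_subset_Icc_self hτ)
        have h3 : |c τ| ≤ 1 + ε := by
          have := abs_sub_abs_le_abs_sub (c τ) 1
          simp only [abs_one] at this
          linarith
        rw [Real.norm_eq_abs, abs_mul]
        refine mul_le_mul ?_ h3 (abs_nonneg _) hM0
        simpa [Real.norm_eq_abs] using h2
      exact h1.congr (Filter.Eventually.of_forall fun τ => by ring)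
    rw [intervalIntegral.integral_of_le hT.le, intervalIntegral.integral_of_le hT.le]
    have hdiff : (∫ τ in Set.Ioc (0:ℝ) T, u τ * g τ * c τ) - ∫ τ in Set.Ioc (0:ℝ) T, u τ * g τ
        = ∫ τ in Set.Ioc (0:ℝ) T, (u τ * (c τ - 1)) * g τ := by
      rw [← integral_sub hugc hug]
      exact integral_congr_ae (Filter.Eventually.of_forall fun τ => by ring)
    rw [hdiff]
    -- Cauchy–Schwarz
    have hrpow : ∀ x : ℝ, ‖x‖ ^ (2:ℝ) = x ^ 2 := fun x => by
      rw [show (2:ℝ) = ((2:ℕ):ℝ) by norm_num, Real.rpow_natCast]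
      simp [Real.norm_eq_abs, sq_abs]
    have hconj : (2:ℝ).HolderConjugate 2 := Real.holderConjugate_iff.mpr ⟨one_lt_two, by norm_num⟩
    have hFL2' : MemLp (fun τ => u τ * (c τ - 1)) (ENNReal.ofReal 2)
        (volume.restrict (Set.Ioc (0:ℝ) T)) := by
      rwa [show ENNReal.ofReal (2:ℝ) = 2 by simp]
    have hgL2' : MemLp g (ENNReal.ofReal 2) (volume.restrict (Set.Ioc (0:ℝ) T)) := by
      rwa [show ENNReal.ofReal (2:ℝ) = 2 by simp]
    have hCS : |∫ τ in Set.Ioc (0:ℝ) T, (u τ * (c τ - 1)) * g τ|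
        ≤ (∫ τ in Set.Ioc (0:ℝ) T, (u τ * (c τ - 1)) ^ 2) ^ ((1:ℝ)/2)
          * (∫ τ in Set.Ioc (0:ℝ) T, g τ ^ 2) ^ ((1:ℝ)/2) := by
      have h1 : |∫ τ in Set.Ioc (0:ℝ) T, (u τ * (c τ - 1)) * g τ|
          ≤ ∫ τ in Set.Ioc (0:ℝ) T, ‖(u τ * (c τ - 1)) * g τ‖ := by
        simpa [Real.norm_eq_abs] using
          norm_integral_le_integral_norm (μ := volume.restrict (Set.Ioc (0:ℝ) T))
            (fun τ => (u τ * (c τ - 1)) * g τ)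
      have h2 := integral_mul_norm_le_Lp_mul_Lq hconj hFL2' hgL2'
      calc |∫ τ in Set.Ioc (0:ℝ) T, (u τ * (c τ - 1)) * g τ|
          ≤ ∫ τ in Set.Ioc (0:ℝ) T, ‖(u τ * (c τ - 1)) * g τ‖ := h1
        _ = ∫ τ in Set.Ioc (0:ℝ) T, ‖u τ * (c τ - 1)‖ * ‖g τ‖ := by
            simp [norm_mul]
        _ ≤ (∫ τ in Set.Ioc (0:ℝ) T, ‖u τ * (c τ - 1)‖ ^ (2:ℝ)) ^ ((1:ℝ)/2)
            * (∫ τ in Set.Ioc (0:ℝ) T, ‖g τ‖ ^ (2:ℝ)) ^ ((1:ℝ)/2) := h2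
        _ = (∫ τ in Set.Ioc (0:ℝ) T, (u τ * (c τ - 1)) ^ 2) ^ ((1:ℝ)/2)
            * (∫ τ in Set.Ioc (0:ℝ) T, g τ ^ 2) ^ ((1:ℝ)/2) := by
            congr 2 <;> exact integral_congr_ae (Filter.Eventually.of_forall fun τ => hrpow _)
    have hF2int : Integrable (fun τ => (u τ * (c τ - 1)) ^ 2)
        (volume.restrict (Set.Ioc (0:ℝ) T)) := hFL2.integrable_sq
    have hu2int : Integrable (fun τ => ε ^ 2 * u τ ^ 2)
        (volume.restrict (Set.Ioc (0:ℝ) T)) :=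
      ((hu.pow 2).integrableOn_Ioc).const_mul _
    have hF2le : (∫ τ in Set.Ioc (0:ℝ) T, (u τ * (c τ - 1)) ^ 2) ≤ ε ^ 2 := by
      have h1 : (∫ τ in Set.Ioc (0:ℝ) T, (u τ * (c τ - 1)) ^ 2)
          ≤ ∫ τ in Set.Ioc (0:ℝ) T, ε ^ 2 * u τ ^ 2 := by
        refine integral_mono_of_nonneg (Filter.Eventually.of_forall fun τ => sq_nonneg _)
          hu2int ?_
        filter_upwards [hmemIoc] with τ hτ
        have h2 := hb τ hτ
        have h3 : (c τ - 1) ^ 2 ≤ ε ^ 2 := by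
          rw [← sq_abs]
          exact pow_le_pow_left₀ (abs_nonneg _) h2 2
        calc (u τ * (c τ - 1)) ^ 2 = u τ ^ 2 * (c τ - 1) ^ 2 := by ring
          _ ≤ u τ ^ 2 * ε ^ 2 := mul_le_mul_of_nonneg_left h3 (sq_nonneg _)
          _ = ε ^ 2 * u τ ^ 2 := by ring
      calc (∫ τ in Set.Ioc (0:ℝ) T, (u τ * (c τ - 1)) ^ 2)
          ≤ ∫ τ in Set.Ioc (0:ℝ) T, ε ^ 2 * u τ ^ 2 := h1
        _ = ε ^ 2 * ∫ τ in Set.Ioc (0:ℝ) T, u τ ^ 2 := integral_const_mul _ _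
        _ = ε ^ 2 := by rw [hu2, mul_one]
    have hF20 : (0:ℝ) ≤ ∫ τ in Set.Ioc (0:ℝ) T, (u τ * (c τ - 1)) ^ 2 :=
      setIntegral_nonneg measurableSet_Ioc fun τ _ => sq_nonneg _
    calc (∫ τ in Set.Ioc (0:ℝ) T, (u τ * (c τ - 1)) * g τ) ^ 2
        = |∫ τ in Set.Ioc (0:ℝ) T, (u τ * (c τ - 1)) * g τ| ^ 2 := (sq_abs _).symm
      _ ≤ ((∫ τ in Set.Ioc (0:ℝ) T, (u τ * (c τ - 1)) ^ 2) ^ ((1:ℝ)/2)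
            * (∫ τ in Set.Ioc (0:ℝ) T, g τ ^ 2) ^ ((1:ℝ)/2)) ^ 2 :=
          pow_le_pow_left₀ (abs_nonneg _) hCS 2
      _ = (∫ τ in Set.Ioc (0:ℝ) T, (u τ * (c τ - 1)) ^ 2)
            * (∫ τ in Set.Ioc (0:ℝ) T, g τ ^ 2) := by
          rw [mul_pow, ← Real.sqrt_eq_rpow, ← Real.sqrt_eq_rpow,
            Real.sq_sqrt hF20, Real.sq_sqrt hg0]
      _ ≤ ε ^ 2 * ∫ τ in Set.Ioc (0:ℝ) T, g τ ^ 2 :=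
          mul_le_mul_of_nonneg_right hF2le hg0
  · -- non-measurable slice: both interval integrals are junk (= 0)
    have hkey : ∀ d : ℝ → ℝ, Measurable d → (∀ τ ∈ Set.Ioo (0:ℝ) T, d τ ≠ 0) →
        ¬ IntervalIntegrable (fun τ => u τ * g τ * d τ) volume 0 T := by
      intro d hd hd0 hcontra
      rw [intervalIntegrable_iff_integrableOn_Ioc_of_le hT.le] at hcontra
      have haesm : AEStronglyMeasurable (fun τ => u τ * g τ * d τ)
          (volume.restrict (Set.Ioc (0:ℝ) T)) := hcontra.1
      have h2 : AEStronglyMeasurable (fun τ => (u τ * g τ * d τ) * (u τ * d τ)⁻¹)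
          (volume.restrict (Set.Ioc (0:ℝ) T)) :=
        haesm.mul ((hu.measurable.mul hd).inv).aestronglyMeasurable
      refine hm (h2.congr ?_)
      filter_upwards [haeIoo] with τ hτ
      have h3 : u τ ≠ 0 := hu0 τ hτ
      have h4 : d τ ≠ 0 := hd0 τ hτ
      field_simp
    have h1 := hkey c hc (fun τ hτ => hc0 τ (Set.Ioo_subset_Ioc_self hτ))
    have h2' : ¬ IntervalIntegrable (fun τ => u τ * g τ) volume 0 T := by
      have := hkey (fun _ => 1) measurable_const (fun _ _ => one_ne_zero)
      simpa using this
    rw [intervalIntegral.integral_undef h1, intervalIntegral.integral_undef h2']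
    simpa using mul_nonneg (sq_nonneg ε) hg0

theorem projection_operators_comparison (K : ℝ) (hK : 0 < K)
    (η : ℝ) (hη : η ∈ Set.Ioo (0 : ℝ) (1 / 24)) (ρ : ℝ) (hρ : ρ = 1 / 8 + η) :
    ∃ C > (0 : ℝ), ∃ h₀ ∈ Set.Ioo (0 : ℝ) 1,
      ∀ κ : ℝ → ℝ, Continuous κ → (∀ s, |κ s| ≤ K) →
      ∀ h ∈ Set.Ioo (0 : ℝ) h₀,
      ∀ w : ℝ, 0 < w → secular ρ h w = 0 →
      ∀ A : ℝ, 0 < A →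
      (∫ τ in (0 : ℝ)..(h ^ (-ρ)),
        (A * (Real.exp (-w * τ) - Real.exp (-2 * w * h ^ (-ρ)) * Real.exp (w * τ))) ^ 2) = 1 →
      ∀ v : ℝ → ℝ → ℝ,
        IntegrableOn (fun p : ℝ × ℝ => (v p.1 p.2) ^ 2)
          ((Set.Ioo (-(h ^ (-η))) (h ^ (-η))) ×ˢ (Set.Ioo 0 (h ^ (-ρ)))) →
        (Real.sqrt (∫ σ in Set.Ioo (-(h ^ (-η))) (h ^ (-η)),
            ((∫ τ in (0 : ℝ)..(h ^ (-ρ)),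
                (A * (Real.exp (-w * τ) - Real.exp (-2 * w * h ^ (-ρ)) * Real.exp (w * τ))) *
                  v σ τ * (1 - h ^ ((1 : ℝ) / 2) * τ * κ (h ^ ((1 : ℝ) / 8) * σ)))
              - ∫ τ in (0 : ℝ)..(h ^ (-ρ)),
                (A * (Real.exp (-w * τ) - Real.exp (-2 * w * h ^ (-ρ)) * Real.exp (w * τ))) *
                  v σ τ) ^ 2) ≤
          C * h ^ ((1 : ℝ) / 2 - ρ) *
            Real.sqrt (∫ σ in Set.Ioo (-(h ^ (-η))) (h ^ (-η)),
              ∫ τ in Set.Ioo (0 : ℝ) (h ^ (-ρ)), (v σ τ) ^ 2)) ∧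
        (Real.sqrt (∫ σ in Set.Ioo (-(h ^ (-η))) (h ^ (-η)),
            ((∫ τ in (0 : ℝ)..(h ^ (-ρ)),
                (A * (Real.exp (-w * τ) - Real.exp (-2 * w * h ^ (-ρ)) * Real.exp (w * τ))) *
                  v σ τ * (1 - h ^ ((1 : ℝ) / 2) * τ * κ (h ^ ((1 : ℝ) / 8) * σ))⁻¹)
              - ∫ τ in (0 : ℝ)..(h ^ (-ρ)),
                (A * (Real.exp (-w * τ) - Real.exp (-2 * w * h ^ (-ρ)) * Real.exp (w * τ))) *
                  v σ τ) ^ 2) ≤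
          C * h ^ ((1 : ℝ) / 2 - ρ) *
            Real.sqrt (∫ σ in Set.Ioo (-(h ^ (-η))) (h ^ (-η)),
              ∫ τ in Set.Ioo (0 : ℝ) (h ^ (-ρ)), (v σ τ) ^ 2)) := by
  obtain ⟨hη0, hη24⟩ := hη
  have hepos : (0:ℝ) < 3/8 - η := by linarith
  refine ⟨2*K, by positivity,
    min (1/2) ((1/(2*K)) ^ ((1:ℝ)/(3/8 - η))),
    ⟨lt_min (by norm_num) (Real.rpow_pos_of_pos (by positivity) _),
     lt_of_le_of_lt (min_le_left _ _) (by norm_num)⟩, ?_⟩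
  intro κ hκcont hκ h hh w hw hsec A hA hnorm v hv
  obtain ⟨hh0, hhlt⟩ := hh
  have hT : (0:ℝ) < h ^ (-ρ) := Real.rpow_pos_of_pos hh0 _
  have heq : (1:ℝ)/2 - ρ = 3/8 - η := by rw [hρ]; ring
  have hεle : K * h ^ ((1:ℝ)/2 - ρ) ≤ 1/2 := by
    have hle : h ≤ (1/(2*K)) ^ ((1:ℝ)/(3/8 - η)) :=
      le_of_lt (lt_of_lt_of_le hhlt (min_le_right _ _))
    have h1 := Real.rpow_le_rpow hh0.le hle hepos.le
    rw [← Real.rpow_mul (by positivity), one_div_mul_cancel (ne_of_gt hepos),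
      Real.rpow_one] at h1
    rw [heq]
    calc K * h ^ ((3:ℝ)/8 - η) ≤ K * (1/(2*K)) := by
          rw [show (3:ℝ)/8 - η = 3/8 - η by ring]
          exact mul_le_mul_of_nonneg_left h1 hK.le
      _ = 1/2 := by
          field_simp
  have hε0 : (0:ℝ) ≤ K * h ^ ((1:ℝ)/2 - ρ) := by positivity
  have hhalfT : h ^ ((1:ℝ)/2) * h ^ (-ρ) = h ^ ((1:ℝ)/2 - ρ) := by
    rw [← Real.rpow_add hh0]; ring_nf
  -- u properties
  have hu_cont : Continuous (fun τ : ℝ =>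
      A * (Real.exp (-w * τ) - Real.exp (-2 * w * h ^ (-ρ)) * Real.exp (w * τ))) := by
    fun_prop
  have hu0 : ∀ τ ∈ Set.Ioo (0:ℝ) (h ^ (-ρ)),
      A * (Real.exp (-w * τ) - Real.exp (-2 * w * h ^ (-ρ)) * Real.exp (w * τ)) ≠ 0 := by
    intro τ hτ
    have h1 : Real.exp (-2 * w * h ^ (-ρ)) * Real.exp (w * τ) < Real.exp (-w * τ) := by
      rw [← Real.exp_add]
      apply Real.exp_lt_exp.2
      nlinarith [hτ.1, hτ.2, hw]
    exact ne_of_gt (mul_pos hA (sub_pos.2 h1))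
  have hu2 : (∫ τ in Set.Ioc (0:ℝ) (h ^ (-ρ)),
      (A * (Real.exp (-w * τ) - Real.exp (-2 * w * h ^ (-ρ)) * Real.exp (w * τ))) ^ 2) = 1 := by
    rw [← intervalIntegral.integral_of_le hT.le]; exact hnorm
  -- Fubini facts
  have hv' : Integrable (fun p : ℝ × ℝ => v p.1 p.2 ^ 2)
      ((volume.restrict (Set.Ioo (-(h ^ (-η))) (h ^ (-η)))).prod
        (volume.restrict (Set.Ioo (0:ℝ) (h ^ (-ρ))))) := by
    rw [Measure.prod_restrict, ← Measure.volume_eq_prod]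
    exact hv
  have haeslice := hv'.prod_right_ae
  have hGint := hv'.integral_prod_left
  -- c₁ bounds
  have hc1bound : ∀ σ : ℝ, ∀ τ ∈ Set.Ioc (0:ℝ) (h ^ (-ρ)),
      |(1 - h ^ ((1:ℝ)/2) * τ * κ (h ^ ((1:ℝ)/8) * σ)) - 1| ≤ K * h ^ ((1:ℝ)/2 - ρ) := by
    intro σ τ hτ
    have h1 : |(1 - h ^ ((1:ℝ)/2) * τ * κ (h ^ ((1:ℝ)/8) * σ)) - 1|
        = h ^ ((1:ℝ)/2) * τ * |κ (h ^ ((1:ℝ)/8) * σ)| := by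
      rw [show (1:ℝ) - h ^ ((1:ℝ)/2)*τ*κ (h ^ ((1:ℝ)/8) * σ) - 1
          = -(h ^ ((1:ℝ)/2)*τ*κ (h ^ ((1:ℝ)/8) * σ)) by ring, abs_neg, abs_mul, abs_mul,
        abs_of_nonneg (le_of_lt (Real.rpow_pos_of_pos hh0 _)), abs_of_nonneg hτ.1.le]
    rw [h1]
    have hκb := hκ (h ^ ((1:ℝ)/8) * σ)
    have hp : (0:ℝ) < h ^ ((1:ℝ)/2) := Real.rpow_pos_of_pos hh0 _
    have habs : (0:ℝ) ≤ |κ (h ^ ((1:ℝ)/8) * σ)| := abs_nonneg _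
    calc h ^ ((1:ℝ)/2) * τ * |κ (h ^ ((1:ℝ)/8) * σ)|
        = h ^ ((1:ℝ)/2) * (τ * |κ (h ^ ((1:ℝ)/8) * σ)|) := by ring
      _ ≤ h ^ ((1:ℝ)/2) * (h ^ (-ρ) * K) :=
          mul_le_mul_of_nonneg_left (mul_le_mul hτ.2 hκb habs hT.le) hp.le
      _ = K * (h ^ ((1:ℝ)/2) * h ^ (-ρ)) := by ring
      _ = K * h ^ ((1:ℝ)/2 - ρ) := by rw [hhalfT]
  have hc1pos : ∀ σ : ℝ, ∀ τ ∈ Set.Ioc (0:ℝ) (h ^ (-ρ)),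
      (1/2:ℝ) ≤ 1 - h ^ ((1:ℝ)/2) * τ * κ (h ^ ((1:ℝ)/8) * σ) := by
    intro σ τ hτ
    have h1 := abs_le.1 (hc1bound σ τ hτ)
    linarith [h1.1]
  -- the main estimate, for a general multiplier c
  have main : ∀ c : ℝ → ℝ → ℝ, (∀ σ, Measurable (c σ)) →
      (∀ σ : ℝ, ∀ τ ∈ Set.Ioc (0:ℝ) (h ^ (-ρ)),
        c σ τ ≠ 0 ∧ |c σ τ - 1| ≤ 2 * (K * h ^ ((1:ℝ)/2 - ρ))) →
      Real.sqrt (∫ σ in Set.Ioo (-(h ^ (-η))) (h ^ (-η)),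
          ((∫ τ in (0 : ℝ)..(h ^ (-ρ)),
              (A * (Real.exp (-w * τ) - Real.exp (-2 * w * h ^ (-ρ)) * Real.exp (w * τ))) *
                v σ τ * c σ τ)
            - ∫ τ in (0 : ℝ)..(h ^ (-ρ)),
              (A * (Real.exp (-w * τ) - Real.exp (-2 * w * h ^ (-ρ)) * Real.exp (w * τ))) *
                v σ τ) ^ 2) ≤
        2 * K * h ^ ((1 : ℝ) / 2 - ρ) *
          Real.sqrt (∫ σ in Set.Ioo (-(h ^ (-η))) (h ^ (-η)),
            ∫ τ in Set.Ioo (0 : ℝ) (h ^ (-ρ)), (v σ τ) ^ 2) := by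
    intro c hcm hcprop
    have hpt : ∀ᵐ σ ∂(volume.restrict (Set.Ioo (-(h ^ (-η))) (h ^ (-η)))),
        ((∫ τ in (0 : ℝ)..(h ^ (-ρ)),
            (A * (Real.exp (-w * τ) - Real.exp (-2 * w * h ^ (-ρ)) * Real.exp (w * τ))) *
              v σ τ * c σ τ)
          - ∫ τ in (0 : ℝ)..(h ^ (-ρ)),
            (A * (Real.exp (-w * τ) - Real.exp (-2 * w * h ^ (-ρ)) * Real.exp (w * τ))) *
              v σ τ) ^ 2
        ≤ (2 * (K * h ^ ((1:ℝ)/2 - ρ))) ^ 2 *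
            ∫ τ in Set.Ioo (0:ℝ) (h ^ (-ρ)), v σ τ ^ 2 := by
      filter_upwards [haeslice] with σ hσ
      have hgInt : IntegrableOn (fun τ => v σ τ ^ 2) (Set.Ioc (0:ℝ) (h ^ (-ρ))) := by
        rw [integrableOn_Ioc_iff_integrableOn_Ioo]
        exact hσ
      have hks := key_slice (h ^ (-ρ)) hT
        (fun τ => A * (Real.exp (-w * τ) - Real.exp (-2 * w * h ^ (-ρ)) * Real.exp (w * τ)))
        hu_cont hu0 hu2 (c σ) (hcm σ)
        (fun τ hτ => (hcprop σ τ hτ).1) (2 * (K * h ^ ((1:ℝ)/2 - ρ))) (by positivity)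
        (fun τ hτ => (hcprop σ τ hτ).2) (v σ) hgInt
      rw [integral_Ioc_eq_integral_Ioo] at hks
      exact hks
    have h2 : (∫ σ in Set.Ioo (-(h ^ (-η))) (h ^ (-η)),
        ((∫ τ in (0 : ℝ)..(h ^ (-ρ)),
            (A * (Real.exp (-w * τ) - Real.exp (-2 * w * h ^ (-ρ)) * Real.exp (w * τ))) *
              v σ τ * c σ τ)
          - ∫ τ in (0 : ℝ)..(h ^ (-ρ)),
            (A * (Real.exp (-w * τ) - Real.exp (-2 * w * h ^ (-ρ)) * Real.exp (w * τ))) *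
              v σ τ) ^ 2)
        ≤ (2 * (K * h ^ ((1:ℝ)/2 - ρ))) ^ 2 *
            ∫ σ in Set.Ioo (-(h ^ (-η))) (h ^ (-η)),
              ∫ τ in Set.Ioo (0:ℝ) (h ^ (-ρ)), v σ τ ^ 2 := by
      refine (integral_mono_of_nonneg (Filter.Eventually.of_forall fun σ => sq_nonneg _)
        ?_ hpt).trans_eq (integral_const_mul _ _)
      exact hGint.const_mul _
    calc Real.sqrt (∫ σ in Set.Ioo (-(h ^ (-η))) (h ^ (-η)),
          ((∫ τ in (0 : ℝ)..(h ^ (-ρ)),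
              (A * (Real.exp (-w * τ) - Real.exp (-2 * w * h ^ (-ρ)) * Real.exp (w * τ))) *
                v σ τ * c σ τ)
            - ∫ τ in (0 : ℝ)..(h ^ (-ρ)),
              (A * (Real.exp (-w * τ) - Real.exp (-2 * w * h ^ (-ρ)) * Real.exp (w * τ))) *
                v σ τ) ^ 2)
        ≤ Real.sqrt ((2 * (K * h ^ ((1:ℝ)/2 - ρ))) ^ 2 *
            ∫ σ in Set.Ioo (-(h ^ (-η))) (h ^ (-η)),
              ∫ τ in Set.Ioo (0:ℝ) (h ^ (-ρ)), v σ τ ^ 2) := Real.sqrt_le_sqrt h2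
      _ = (2 * (K * h ^ ((1:ℝ)/2 - ρ))) *
            Real.sqrt (∫ σ in Set.Ioo (-(h ^ (-η))) (h ^ (-η)),
              ∫ τ in Set.Ioo (0:ℝ) (h ^ (-ρ)), v σ τ ^ 2) := by
          rw [Real.sqrt_mul (sq_nonneg _), Real.sqrt_sq (by positivity)]
      _ = 2 * K * h ^ ((1 : ℝ) / 2 - ρ) *
            Real.sqrt (∫ σ in Set.Ioo (-(h ^ (-η))) (h ^ (-η)),
              ∫ τ in Set.Ioo (0:ℝ) (h ^ (-ρ)), v σ τ ^ 2) := by ring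
  constructor
  · refine main (fun σ τ => 1 - h ^ ((1:ℝ)/2) * τ * κ (h ^ ((1:ℝ)/8) * σ)) ?_ ?_
    · intro σ
      exact measurable_const.sub ((measurable_id.const_mul _).mul_const _)
    · intro σ τ hτ
      refine ⟨ne_of_gt (lt_of_lt_of_le one_half_pos (hc1pos σ τ hτ)), ?_⟩
      have := hc1bound σ τ hτ
      linarith
  · refine main (fun σ τ => (1 - h ^ ((1:ℝ)/2) * τ * κ (h ^ ((1:ℝ)/8) * σ))⁻¹) ?_ ?_
    · intro σ
      exact (measurable_const.sub ((measurable_id.const_mul _).mul_const _)).inv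
    · intro σ τ hτ
      have hb1 := hc1bound σ τ hτ
      have hp := hc1pos σ τ hτ
      have hx0 : (1 - h ^ ((1:ℝ)/2) * τ * κ (h ^ ((1:ℝ)/8) * σ)) ≠ 0 := by linarith
      refine ⟨inv_ne_zero hx0, ?_⟩
      have hrw : (1 - h ^ ((1:ℝ)/2) * τ * κ (h ^ ((1:ℝ)/8) * σ))⁻¹ - 1
          = (1 - (1 - h ^ ((1:ℝ)/2) * τ * κ (h ^ ((1:ℝ)/8) * σ)))
            / (1 - h ^ ((1:ℝ)/2) * τ * κ (h ^ ((1:ℝ)/8) * σ)) := by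
        field_simp
      rw [hrw, abs_div]
      have h1 : |1 - (1 - h ^ ((1:ℝ)/2) * τ * κ (h ^ ((1:ℝ)/8) * σ))| ≤ K * h ^ ((1:ℝ)/2 - ρ) := by
        rw [abs_sub_comm]
        exact hb1
      have h2 : (1/2:ℝ) ≤ |1 - h ^ ((1:ℝ)/2) * τ * κ (h ^ ((1:ℝ)/8) * σ)| :=
        le_trans hp (le_abs_self _)
      calc |1 - (1 - h ^ ((1:ℝ)/2) * τ * κ (h ^ ((1:ℝ)/8) * σ))|
            / |1 - h ^ ((1:ℝ)/2) * τ * κ (h ^ ((1:ℝ)/8) * σ)|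
          ≤ (K * h ^ ((1:ℝ)/2 - ρ)) / (1/2) := div_le_div₀ hε0 h1 one_half_pos h2
        _ = 2 * (K * h ^ ((1:ℝ)/2 - ρ)) := by ring
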